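/- Assume A ⊂ B ⊂ P(ω₁), B is dichotomous, and for every club C ⊆ ω₁ there exists b ∈ B that is blockish for C. Then Irr_mm(B) ≥ 𝔟_{ω₁}. -/

import Mathlib

open Cardinal Set

universe u
variable {B : Type u} [BooleanAlgebra B]

/-- Membership in the boolean subalgebra of `B` generated by `E`. -/
inductive InGen (E : Set B) : B → Prop
  | base {a : B} : a ∈ E → InGen E a
  | bot : InGen E ⊥
  | compl {a : B} : InGen E a → InGen E aᶜ
  | sup {a b : B} : InGen E a → InGen E b → InGen E (a ⊔ b)

/-- `E` is irredundant. -/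
def Irred (E : Set B) : Prop := ∀ a ∈ E, ¬ InGen (E \ {a}) a

/-- `E` is independent. -/
def Indep (E : Set B) : Prop :=
  ∀ F G : Finset B, ↑F ⊆ E → ↑G ⊆ E → Disjoint F G →
    F.inf id ⊓ G.inf (fun a => aᶜ) ≠ ⊥

/-- `S` is dense in `B`. -/
def DenseSub (S : Set B) : Prop := ∀ b : B, b ≠ ⊥ → ∃ d ∈ S, d ≠ ⊥ ∧ d ≤ b

/-- pi-weight of `B`: least size of a dense subset. -/
noncomputable def piWeight (B : Type u) [BooleanAlgebra B] : Cardinal :=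
  sInf {c | ∃ S : Set B, DenseSub S ∧ #S = c}

/-- `E` is a maximal irredundant subset of `B`. -/
def MaxIrred (E : Set B) : Prop :=
  Irred E ∧ ∀ b : B, b ∉ E → ¬ Irred (insert b E)

/-- least size of a maximal irredundant subset of `B`. -/
noncomputable def irrMM (B : Type u) [BooleanAlgebra B] : Cardinal :=
  sInf {c | ∃ E : Set B, MaxIrred E ∧ #E = c}


/-- A fixed set of size ℵ₁ with its canonical well-order: "ω₁". -/
noncomputable def W : Type := (Cardinal.aleph 1).ord.ToType

noncomputable instance : LinearOrder W := inferInstanceAs (LinearOrder (Cardinal.aleph 1).ord.ToType)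

/-- The finite-cofinite algebra on ω₁. -/
def finCofin : Set (Set W) := {b | b.Finite ∨ bᶜ.Finite}

/-- `S` is (the underlying set of) a subalgebra of `P(ω₁)`. -/
def IsSubalg (S : Set (Set W)) : Prop :=
  ∅ ∈ S ∧ (∀ a ∈ S, aᶜ ∈ S) ∧ ∀ a ∈ S, ∀ b ∈ S, a ∪ b ∈ S

/-- `E` is a maximal irredundant subset of the subalgebra (with carrier) `Bs`. -/
def MaxIrredIn (Bs E : Set (Set W)) : Prop :=
  E ⊆ Bs ∧ Irred E ∧ ∀ b ∈ Bs, b ∉ E → ¬ Irred (insert b E)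

/-- `Irr_mm` of a subalgebra of `P(ω₁)` with carrier `Bs`. -/
noncomputable def irrMMIn (Bs : Set (Set W)) : Cardinal :=
  sInf {c | ∃ E, MaxIrredIn Bs E ∧ #E = c}

/-- pi-weight of a subalgebra of `P(ω₁)` with carrier `Bs`. -/
noncomputable def piIn (Bs : Set (Set W)) : Cardinal :=
  sInf {c | ∃ S, S ⊆ Bs ∧ (∀ b ∈ Bs, b ≠ ∅ → ∃ d ∈ S, d ≠ ∅ ∧ d ⊆ b) ∧ #S = c}

/-- `C` is a closed unbounded subset of ω₁. -/
def IsClubW (C : Set W) : Prop :=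
  (∀ α : W, ∃ β ∈ C, α < β) ∧
    ∀ α : W, (C ∩ Set.Iio α).Nonempty → IsLUB (C ∩ Set.Iio α) α → α ∈ C

/-- `α` and `β` lie in the same `C`-block. -/
def SameBlock (C : Set W) (α β : W) : Prop := ∀ γ ∈ C, (γ ≤ α ↔ γ ≤ β)

/-- `C` is a nice club: all of its blocks are infinite. -/
def NiceClub (C : Set W) : Prop := IsClubW C ∧ ∀ α : W, {β | SameBlock C α β}.Infinite

/-- `b` is a union of `C`-blocks. -/
def BlockUnion (C : Set W) (b : Set W) : Prop :=
  ∀ α β : W, SameBlock C α β → (α ∈ b ↔ β ∈ b)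

/-- `b` is blockish for `C`: both `b` and its complement are unions of ℵ₁ many `C`-blocks. -/
def Blockish (C : Set W) (b : Set W) : Prop :=
  BlockUnion C b ∧ ¬ b.Countable ∧ ¬ bᶜ.Countable

/-- eventual domination: `f α ≤ g α` except on a set of size `< ℵ₁`. -/
def EvDom (f g : W → W) : Prop := {α | ¬ f α ≤ g α}.Countable

/-- the bounding number 𝔟_{ω₁}. -/
noncomputable def bW : Cardinal :=
  sInf {c | ∃ F : Set (W → W), (∀ g, ∃ f ∈ F, ¬ EvDom f g) ∧ #F = c}

/-- the dominating number 𝔡_{ω₁}. -/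
noncomputable def dW : Cardinal :=
  sInf {c | ∃ F : Set (W → W), (∀ g, ∃ f ∈ F, EvDom g f) ∧ #F = c}

/-- `T` splits `X`. -/
def Splits (T X : Set W) : Prop := ¬ (X ∩ T).Countable ∧ ¬ (X \ T).Countable

/-- the reaping number 𝔯_{ω₁}. -/
noncomputable def rW : Cardinal :=
  sInf {c | ∃ R : Set (Set W), (∀ X ∈ R, ¬ X.Countable) ∧
    (∀ T : Set W, ∃ X ∈ R, ¬ Splits T X) ∧ #R = c}

/-- the nice club `C` strongly splits `R`. -/
def StrSplits (C : Set W) (R : Set (Set W)) : Prop :=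
  ∀ b : Set W, Blockish C b → ∀ X ∈ R, Splits b X

/-- the strong reaping number r̂_{ω₁}. -/
noncomputable def rHatW : Cardinal :=
  sInf {c | ∃ R : Set (Set W), (∀ X ∈ R, ¬ X.Countable) ∧
    (∀ C : Set W, NiceClub C → ¬ StrSplits C R) ∧ #R = c}

/-- a subalgebra of `P(ω₁)` is dichotomous iff none of its members is countably infinite. -/
def Dichot (Bs : Set (Set W)) : Prop := ∀ b ∈ Bs, ¬ (b.Countable ∧ b.Infinite)

/-! ### Basic facts about W -/

noncomputable instance : WellFoundedLT W :=
  inferInstanceAs (WellFoundedLT (Cardinal.aleph 1).ord.ToType)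

lemma mkW : #W = Cardinal.aleph 1 :=
  Cardinal.mk_ord_toType _

instance : Nonempty W := by
  rw [← Cardinal.mk_ne_zero_iff, mkW]
  exact (Cardinal.aleph_pos 1).ne'

lemma countable_Iio (α : W) : (Set.Iio α).Countable := by
  rw [Cardinal.countable_iff_lt_aleph_one]
  exact Cardinal.mk_Iio_ord_toType α

lemma countable_Iic (α : W) : (Set.Iic α).Countable := by
  have : Set.Iic α ⊆ Set.Iio α ∪ {α} := by
    intro x hx
    rcases lt_or_eq_of_le (Set.mem_Iic.1 hx) with h | h
    · exact Or.inl h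
    · exact Or.inr (by simp [h])
  exact ((countable_Iio α).union (Set.countable_singleton α)).mono this

lemma not_countable_univW : ¬ (Set.univ : Set W).Countable := by
  rw [Cardinal.countable_iff_lt_aleph_one, Cardinal.mk_univ, mkW]
  exact lt_irrefl _

/-- countable subsets of W have strict upper bounds -/
lemma exists_strict_ub {s : Set W} (hs : s.Countable) : ∃ β : W, ∀ x ∈ s, x < β := by
  by_contra h
  push_neg at h
  apply not_countable_univW
  have : (Set.univ : Set W) ⊆ ⋃ x ∈ s, Set.Iic x := by
    intro β _
    obtain ⟨x, hx, hbx⟩ := h β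
    exact Set.mem_biUnion hx hbx
  exact (hs.biUnion fun x _ => countable_Iic x).mono this

/-- the minimum of a nonempty set of W -/
noncomputable def minOf (s : Set W) (hs : s.Nonempty) : W :=
  (IsWellFounded.wf (r := ((· < ·) : W → W → Prop))).min s hs

lemma minOf_mem (s : Set W) (hs : s.Nonempty) : minOf s hs ∈ s :=
  (IsWellFounded.wf (r := ((· < ·) : W → W → Prop))).min_mem s hs

lemma minOf_le (s : Set W) (hs : s.Nonempty) {x : W} (hx : x ∈ s) : minOf s hs ≤ x :=
  le_of_not_gt ((IsWellFounded.wf (r := ((· < ·) : W → W → Prop))).not_lt_min s hx)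

open Classical in
noncomputable def cUB (s : Set W) : W :=
  if h : ∃ β : W, ∀ x ∈ s, x < β then h.choose else Classical.arbitrary W

open Classical in
lemma lt_cUB {s : Set W} (hs : s.Countable) {x : W} (hx : x ∈ s) : x < cUB s := by
  rw [cUB, dif_pos (exists_strict_ub hs)]
  exact (exists_strict_ub hs).choose_spec x hx

/-- the least strict upper bound of a countable set -/
noncomputable def lUB (s : Set W) (hs : s.Countable) : W :=
  minOf {β | ∀ x ∈ s, x < β} ⟨cUB s, fun x hx => lt_cUB hs hx⟩

lemma lt_lUB {s : Set W} (hs : s.Countable) {x : W} (hx : x ∈ s) : x < lUB s hs :=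
  minOf_mem {β | ∀ x ∈ s, x < β} _ x hx

lemma lUB_least {s : Set W} (hs : s.Countable) {β : W} (hβ : β < lUB s hs) :
    ∃ x ∈ s, β ≤ x := by
  by_contra h
  push_neg at h
  exact absurd (minOf_le {β' | ∀ x ∈ s, x < β'} _ h) (not_le.2 hβ)

lemma exists_gt (α : W) : ∃ β : W, α < β := by
  obtain ⟨β, hβ⟩ := exists_strict_ub (Set.countable_singleton α)
  exact ⟨β, hβ α rfl⟩

/-- a set that is not countable is nonempty above any point -/
lemma not_countable_inter_Ioi {d : Set W} (hd : ¬ d.Countable) (α : W) :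
    (d ∩ Set.Ioi α).Nonempty := by
  rw [Set.nonempty_iff_ne_empty]
  intro h
  apply hd
  have : d ⊆ Set.Iic α := by
    intro x hx
    by_contra hgt
    exact Set.eq_empty_iff_forall_notMem.1 h x ⟨hx, Set.mem_Ioi.2 (not_le.1 hgt)⟩
  exact (countable_Iic α).mono this

lemma not_countable_mono {s t : Set W} (h : s ⊆ t) (hs : ¬ s.Countable) : ¬ t.Countable :=
  fun ht => hs (ht.mono h)

open Classical in
noncomputable def nextIn (d : Set W) : W → W := fun α =>
  if h : (d ∩ Set.Ioi α).Nonempty then minOf _ h else α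

open Classical in
lemma nextIn_mem {d : Set W} (hd : ¬ d.Countable) (α : W) :
    nextIn d α ∈ d ∧ α < nextIn d α := by
  have h := not_countable_inter_Ioi hd α
  rw [nextIn, dif_pos h]
  exact ⟨(minOf_mem _ h).1, (minOf_mem _ h).2⟩
/-! ### InGen closure lemmas (for `Set W`) -/

lemma InGen.mono {E F : Set (Set W)} (h : E ⊆ F) {x : Set W} (hx : InGen E x) :
    InGen F x := by
  induction hx with
  | base ha => exact InGen.base (h ha)
  | bot => exact InGen.bot
  | compl _ ih => exact InGen.compl ih
  | sup _ _ ih1 ih2 => exact InGen.sup ih1 ih2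

lemma InGen.union {E : Set (Set W)} {x y : Set W} (hx : InGen E x) (hy : InGen E y) :
    InGen E (x ∪ y) := hx.sup hy

lemma InGen.empty {E : Set (Set W)} : InGen E (∅ : Set W) := InGen.bot

lemma InGen.compl' {E : Set (Set W)} {x : Set W} (hx : InGen E x) : InGen E xᶜ := hx.compl

lemma InGen.inter {E : Set (Set W)} {x y : Set W} (hx : InGen E x) (hy : InGen E y) :
    InGen E (x ∩ y) := by
  have : x ∩ y = (xᶜ ∪ yᶜ)ᶜ := by simp
  rw [this]
  exact (hx.compl'.union hy.compl').compl'

lemma InGen.sdiff' {E : Set (Set W)} {x y : Set W} (hx : InGen E x) (hy : InGen E y) :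
    InGen E (x \ y) := by
  rw [Set.diff_eq]
  exact hx.inter hy.compl'

/-- symmetric difference as plain set operations -/
def sd (x y : Set W) : Set W := (x \ y) ∪ (y \ x)

lemma InGen.sd' {E : Set (Set W)} {x y : Set W} (hx : InGen E x) (hy : InGen E y) :
    InGen E (sd x y) := (hx.sdiff' hy).union (hy.sdiff' hx)

lemma sd_empty_iff {x y : Set W} : sd x y = ∅ ↔ x = y := by
  constructor
  · intro h
    rw [sd, Set.union_empty_iff] at h
    exact Set.Subset.antisymm (Set.diff_eq_empty.1 h.1) (Set.diff_eq_empty.1 h.2)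
  · intro h; simp [sd, h]

lemma sd_sd_cancel (x y : Set W) : sd x (sd x y) = y := by
  ext β
  simp only [sd, Set.mem_union, Set.mem_diff, Set.mem_union, Set.mem_diff]
  by_cases h1 : β ∈ x <;> by_cases h2 : β ∈ y <;> simp [h1, h2]

lemma mem_sd_iff {x y : Set W} {β : W} : β ∈ sd x y ↔ (β ∈ x ↔ ¬ β ∈ y) := by
  simp only [sd, Set.mem_union, Set.mem_diff]
  by_cases h1 : β ∈ x <;> by_cases h2 : β ∈ y <;> simp [h1, h2]

lemma InGen.mem_subalg {Bs : Set (Set W)} (hsub : IsSubalg Bs) {E : Set (Set W)}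
    (hE : E ⊆ Bs) {x : Set W} (hx : InGen E x) : x ∈ Bs := by
  induction hx with
  | base ha => exact hE ha
  | bot => exact hsub.1
  | compl _ ih => exact hsub.2.1 _ ih
  | sup _ _ ih1 ih2 => exact hsub.2.2 _ ih1 _ ih2

/-- support lemma: everything generated is generated by a finite subset -/
lemma InGen.exists_finite_support {E : Set (Set W)} {x : Set W} (hx : InGen E x) :
    ∃ G : Set (Set W), G ⊆ E ∧ G.Finite ∧ InGen G x := by
  induction hx with
  | base ha => exact ⟨{_}, by simpa using ha, Set.finite_singleton _, InGen.base rfl⟩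
  | bot => exact ⟨∅, Set.empty_subset _, Set.finite_empty, InGen.bot⟩
  | compl _ ih =>
      obtain ⟨G, hGE, hGf, hG⟩ := ih
      exact ⟨G, hGE, hGf, hG.compl⟩
  | sup _ _ ih1 ih2 =>
      obtain ⟨G1, h1E, h1f, h1⟩ := ih1
      obtain ⟨G2, h2E, h2f, h2⟩ := ih2
      exact ⟨G1 ∪ G2, Set.union_subset h1E h2E, h1f.union h2f,
        (h1.mono Set.subset_union_left).sup (h2.mono Set.subset_union_right)⟩

/-- normal form with respect to an added generator -/
lemma InGen.normal_form {G : Set (Set W)} {b x : Set W} (hx : InGen (insert b G) x) :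
    ∃ u v : Set W, InGen G u ∧ InGen G v ∧ x = (u ∩ b) ∪ (v \ b) := by
  induction hx with
  | @base a ha =>
      rcases ha with rfl | ha
      · refine ⟨Set.univ, ∅, ?_, InGen.bot, by simp⟩
        have : (Set.univ : Set W) = (∅ : Set W)ᶜ := by simp
        rw [this]; exact InGen.bot.compl
      · exact ⟨a, a, InGen.base ha, InGen.base ha, by
          ext β; by_cases hβ : β ∈ b <;> simp [hβ]⟩
  | bot =>
      refine ⟨∅, ∅, InGen.bot, InGen.bot, by simp⟩
  | @compl a _ ih =>
      obtain ⟨u, v, hu, hv, rfl⟩ := ih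
      refine ⟨uᶜ, vᶜ, hu.compl, hv.compl, ?_⟩
      ext β; by_cases hβ : β ∈ b <;> by_cases h2 : β ∈ u <;> by_cases h3 : β ∈ v <;>
        simp [hβ, h2, h3]
  | @sup a c _ _ ih1 ih2 =>
      obtain ⟨u1, v1, hu1, hv1, rfl⟩ := ih1
      obtain ⟨u2, v2, hu2, hv2, rfl⟩ := ih2
      refine ⟨u1 ∪ u2, v1 ∪ v2, hu1.union hu2, hv1.union hv2, ?_⟩
      show (u1 ∩ b ∪ v1 \ b) ∪ (u2 ∩ b ∪ v2 \ b) = _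
      ext β; by_cases hβ : β ∈ b <;> simp [hβ] <;> tauto

lemma sd_comm (x y : Set W) : sd x y = sd y x := Set.union_comm _ _
/-! ### cardinality of the generated algebra -/

/-- levels of the generating construction -/
def Dlevel (E : Set (Set W)) : ℕ → Set (Set W)
  | 0 => E ∪ {(∅ : Set W)}
  | n + 1 => Dlevel E n ∪ (compl '' Dlevel E n) ∪ Set.image2 (· ∪ ·) (Dlevel E n) (Dlevel E n)

lemma Dlevel_mono {E : Set (Set W)} : ∀ {m n : ℕ}, m ≤ n → Dlevel E m ⊆ Dlevel E n := by
  intro m n h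
  induction n with
  | zero => rw [Nat.le_zero.1 h]
  | succ n ih =>
      rcases Nat.lt_or_ge m (n+1) with h' | h'
      · exact fun x hx => Or.inl (Or.inl (ih (Nat.lt_succ_iff.1 h') hx))
      · rw [Nat.le_antisymm h h']

lemma mem_Dlevel_iff_InGen {E : Set (Set W)} {x : Set W} :
    InGen E x ↔ ∃ n, x ∈ Dlevel E n := by
  constructor
  · intro hx
    induction hx with
    | base ha => exact ⟨0, Or.inl ha⟩
    | bot => exact ⟨0, Or.inr (by simp [Set.bot_eq_empty])⟩
    | compl _ ih =>
        obtain ⟨n, hn⟩ := ih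
        exact ⟨n + 1, Or.inl (Or.inr ⟨_, hn, rfl⟩)⟩
    | sup _ _ ih1 ih2 =>
        obtain ⟨n, hn⟩ := ih1
        obtain ⟨m, hm⟩ := ih2
        refine ⟨max n m + 1, Or.inr ?_⟩
        exact Set.mem_image2_of_mem (Dlevel_mono (le_max_left n m) hn)
          (Dlevel_mono (le_max_right n m) hm)
  · rintro ⟨n, hn⟩
    induction n generalizing x with
    | zero =>
        rcases hn with h | h
        · exact InGen.base h
        · rw [Set.mem_singleton_iff.1 h]; exact InGen.bot
    | succ n ih =>
        rcases hn with (h | h) | h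
        · exact ih h
        · obtain ⟨y, hy, rfl⟩ := h
          exact (ih hy).compl
        · obtain ⟨y, hy, z, hz, rfl⟩ := h
          exact (ih hy).union (ih hz)

lemma mk_Dlevel_le {E : Set (Set W)} (n : ℕ) : #(Dlevel E n) ≤ max ℵ₀ #E := by
  induction n with
  | zero =>
      refine le_trans (Cardinal.mk_union_le _ _) ?_
      have h1 : #E ≤ max ℵ₀ #E := le_max_right _ _
      have h2 : #({(∅ : Set W)} : Set (Set W)) ≤ max ℵ₀ #E := by
        rw [Cardinal.mk_singleton]
        exact le_trans (Cardinal.one_le_aleph0) (le_max_left _ _)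
      calc #E + #({(∅ : Set W)} : Set (Set W)) ≤ max ℵ₀ #E + max ℵ₀ #E :=
              add_le_add h1 h2
        _ = max ℵ₀ #E := Cardinal.add_eq_self (le_max_left _ _)
  | succ n ih =>
      have himage : #(compl '' Dlevel E n) ≤ max ℵ₀ #E :=
        le_trans Cardinal.mk_image_le ih
      have him2 : #(Set.image2 (· ∪ ·) (Dlevel E n) (Dlevel E n)) ≤ max ℵ₀ #E := by
        rw [← Set.image_prod]
        refine le_trans Cardinal.mk_image_le ?_
        rw [Cardinal.mk_congr (Equiv.Set.prod _ _)]
        have hprodeq : #(↥(Dlevel E n) × ↥(Dlevel E n)) = #(Dlevel E n) * #(Dlevel E n) := by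
          simp
        rw [hprodeq]
        calc #(Dlevel E n) * #(Dlevel E n) ≤ max ℵ₀ #E * max ℵ₀ #E :=
              mul_le_mul' ih ih
          _ = max ℵ₀ #E := Cardinal.mul_eq_self (le_max_left _ _)
      calc #(Dlevel E n ∪ compl '' Dlevel E n ∪ Set.image2 (· ∪ ·) (Dlevel E n) (Dlevel E n)
              : Set (Set W))
            ≤ #(Dlevel E n ∪ compl '' Dlevel E n : Set (Set W))
              + #(Set.image2 (· ∪ ·) (Dlevel E n) (Dlevel E n)) := Cardinal.mk_union_le _ _
        _ ≤ (#(Dlevel E n) + #(compl '' Dlevel E n))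
              + #(Set.image2 (· ∪ ·) (Dlevel E n) (Dlevel E n)) :=
              add_le_add (Cardinal.mk_union_le _ _) le_rfl
        _ ≤ (max ℵ₀ #E + max ℵ₀ #E) + max ℵ₀ #E :=
              add_le_add (add_le_add ih himage) him2
        _ = max ℵ₀ #E := by
              rw [Cardinal.add_eq_self (le_max_left _ _), Cardinal.add_eq_self (le_max_left _ _)]

lemma mk_InGen_le (E : Set (Set W)) : #{x : Set W | InGen E x} ≤ max ℵ₀ #E := by
  have : {x : Set W | InGen E x} = ⋃ n, Dlevel E n := by
    ext x
    simpa using mem_Dlevel_iff_InGen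
  rw [this]
  refine le_trans (Cardinal.mk_iUnion_le _) ?_
  have h1 : #ℕ ≤ ℵ₀ := le_of_eq Cardinal.mk_nat
  have h2 : ⨆ n, #(Dlevel E n) ≤ max ℵ₀ #E := ciSup_le' fun n => mk_Dlevel_le n
  calc #ℕ * ⨆ n, #(Dlevel E n) ≤ ℵ₀ * max ℵ₀ #E := mul_le_mul' h1 h2
    _ ≤ max ℵ₀ #E * max ℵ₀ #E := mul_le_mul' (le_max_left _ _) le_rfl
    _ = max ℵ₀ #E := Cardinal.mul_eq_self (le_max_left _ _)
/-! ### cross pair lemma -/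

lemma cross_pair {Da : Set (Set W)} (hbot : (∅ : Set W) ∈ Da)
    (hunion : ∀ s ∈ Da, ∀ t ∈ Da, s ∪ t ∈ Da)
    (hinter : ∀ s ∈ Da, ∀ t ∈ Da, s ∩ t ∈ Da)
    (hdiff : ∀ s ∈ Da, ∀ t ∈ Da, s \ t ∈ Da)
    {u w : Set W} (hw : w ∈ Da) (hwf : w.Finite) (huw : u ⊆ w) (hu : u ∉ Da) :
    ∃ p q, p ∈ u ∧ q ∈ w \ u ∧ ∀ s ∈ Da, (p ∈ s ↔ q ∈ s) := by
  by_contra hcon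
  push_neg at hcon
  have sep : ∀ p ∈ u, ∀ q ∈ w \ u, ∃ t ∈ Da, p ∈ t ∧ q ∉ t ∧ t ⊆ w := by
    intro p hp q hq
    obtain ⟨s, hs, hiff⟩ := hcon p q hp hq
    rcases hiff with ⟨hps, hqs⟩ | ⟨hps, hqs⟩
    · exact ⟨s ∩ w, hinter s hs w hw, ⟨hps, huw hp⟩, fun hc => hqs hc.1,
        Set.inter_subset_right⟩
    · exact ⟨w \ s, hdiff w hw s hs, ⟨huw hp, hps⟩, fun hc => hc.2 hqs,
        Set.diff_subset⟩
  have zp : ∀ p ∈ u, ∃ z ∈ Da, p ∈ z ∧ z ⊆ w ∧ ∀ q ∈ w \ u, q ∉ z := by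
    intro p hp
    refine Set.Finite.induction_on_subset (motive := fun Q _ => ∃ z ∈ Da, p ∈ z ∧ z ⊆ w ∧ ∀ q ∈ Q, q ∉ z)
      _ (hwf.subset Set.diff_subset) ⟨w, hw, huw hp, le_refl _, by simp⟩ ?_
    rintro a Q' haS _ _ ⟨z, hz, hpz, hzw, hzavoid⟩
    obtain ⟨t, ht, hpt, hqt, _⟩ := sep p hp a haS
    refine ⟨z ∩ t, hinter z hz t ht, ⟨hpz, hpt⟩, le_trans Set.inter_subset_left hzw, ?_⟩
    rintro q (rfl | hq) hmem
    · exact hqt hmem.2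
    · exact hzavoid q hq hmem.1
  choose! z hzDa hzmem hzw hzavoid using zp
  have biUn : (⋃ p ∈ u, z p) ∈ Da := by
    refine Set.Finite.induction_on_subset (motive := fun T _ => (⋃ p ∈ T, z p) ∈ Da)
      _ (hwf.subset huw) (by simpa using hbot) ?_
    rintro a T' haS _ _ ih
    rw [Set.biUnion_insert]
    exact hunion _ (hzDa a haS) _ ih
  apply hu
  have : u = ⋃ p ∈ u, z p := by
    apply Set.Subset.antisymm
    · intro x hx
      exact Set.mem_biUnion hx (hzmem x hx)
    · intro x hx
      obtain ⟨p, hp, hxz⟩ := Set.mem_iUnion₂.1 hx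
      by_contra hxu
      exact hzavoid p hp x ⟨hzw p hp hxz, hxu⟩ hxz
  rw [this]
  exact biUn
/-! ### club and block machinery -/

lemma IsClubW.nonempty {C : Set W} (hC : IsClubW C) : C.Nonempty := by
  obtain ⟨β, hβ, _⟩ := hC.1 (Classical.arbitrary W)
  exact ⟨β, hβ⟩

lemma club_max_below {C : Set W} (hC : IsClubW C) {β : W} (hex : ∃ γ ∈ C, γ ≤ β) :
    ∃ σ ∈ C, σ ≤ β ∧ ∀ γ ∈ C, γ ≤ β → γ ≤ σ := by
  obtain ⟨γ₀, hγ₀C, hγ₀β⟩ := hex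
  set U : Set W := {z | ∀ γ ∈ C, γ ≤ β → γ ≤ z} with hU
  have hUne : U.Nonempty := ⟨β, fun γ _ h => h⟩
  set σ := minOf U hUne with hσ
  have hσU : σ ∈ U := minOf_mem U hUne
  have hσβ : σ ≤ β := minOf_le U hUne (fun γ _ h => h)
  refine ⟨σ, ?_, hσβ, hσU⟩
  by_cases hmem : ∃ γ ∈ C, γ ≤ β ∧ γ = σ
  · obtain ⟨γ, hγ, _, rfl⟩ := hmem
    exact hγ
  · push_neg at hmem
    have hlt : ∀ γ ∈ C, γ ≤ β → γ < σ := by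
      intro γ hγ hγβ
      exact lt_of_le_of_ne (hσU γ hγ hγβ) (hmem γ hγ hγβ)
    apply hC.2 σ ⟨γ₀, hγ₀C, hlt γ₀ hγ₀C hγ₀β⟩
    constructor
    · intro x hx
      exact le_of_lt hx.2
    · intro z hz
      apply minOf_le U hUne
      intro γ hγ hγβ
      exact hz ⟨hγ, hlt γ hγ hγβ⟩

lemma sameBlock_max {C : Set W} {β σ : W} (hσC : σ ∈ C) (hσβ : σ ≤ β)
    (hmax : ∀ γ ∈ C, γ ≤ β → γ ≤ σ) : SameBlock C β σ := by
  intro γ hγ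
  exact ⟨fun h => hmax γ hγ h, fun h => le_trans h hσβ⟩

noncomputable def nextC (C : Set W) (hC : IsClubW C) (γ : W) : W :=
  minOf (C ∩ Set.Ioi γ) (by
    obtain ⟨β, hβ, hγβ⟩ := hC.1 γ
    exact ⟨β, hβ, hγβ⟩)

lemma nextC_mem (C : Set W) (hC : IsClubW C) (γ : W) :
    nextC C hC γ ∈ C ∧ γ < nextC C hC γ := by
  have h : nextC C hC γ ∈ C ∩ Set.Ioi γ := minOf_mem _ _
  exact ⟨h.1, h.2⟩

lemma nextC_min (C : Set W) (hC : IsClubW C) {γ x : W} (hx : x ∈ C) (hγx : γ < x) :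
    nextC C hC γ ≤ x :=
  minOf_le _ _ ⟨hx, hγx⟩

lemma sameBlock_within (C : Set W) (hC : IsClubW C) {γ x : W} (hγ : γ ∈ C)
    (h1 : γ ≤ x) (h2 : x < nextC C hC γ) : SameBlock C γ x := by
  intro δ hδ
  constructor
  · intro h; exact le_trans h h1
  · intro h
    by_contra hcon
    exact absurd (le_trans (nextC_min C hC hδ (not_le.1 hcon)) h) (not_le.2 h2)

lemma blockUnion_compl {C b : Set W} (h : BlockUnion C b) : BlockUnion C bᶜ := by
  intro α β hs
  have := h α β hs
  simp only [Set.mem_compl_iff]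
  tauto

/-- the set of club points inside a non-countable block union is non-countable -/
lemma blockUnion_clubpts {C b : Set W} (hC : IsClubW C) (hbu : BlockUnion C b)
    (hb : ¬ b.Countable) : ¬ {γ | γ ∈ C ∧ γ ∈ b}.Countable := by
  intro hcnt
  apply hb
  set m₀ := minOf C hC.nonempty with hm₀
  have cover : b ⊆ Set.Iio m₀ ∪ ⋃ γ ∈ {γ | γ ∈ C ∧ γ ∈ b}, Set.Iio (nextC C hC γ) := by
    intro β hβ
    by_cases hex : ∃ γ ∈ C, γ ≤ β
    · obtain ⟨σ, hσC, hσβ, hmax⟩ := club_max_below hC hex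
      have hsb : SameBlock C β σ := sameBlock_max hσC hσβ hmax
      have hσb : σ ∈ b := (hbu β σ hsb).1 hβ
      have hlt : β < nextC C hC σ := by
        by_contra hcon
        have h1 := nextC_mem C hC σ
        have := hmax _ h1.1 (not_lt.1 hcon)
        exact absurd h1.2 (not_lt.2 this)
      right
      exact Set.mem_biUnion (⟨hσC, hσb⟩ : σ ∈ {γ | γ ∈ C ∧ γ ∈ b}) hlt
    · push_neg at hex
      left
      exact not_le.1 (fun h => absurd h (not_le.2 (hex m₀ (minOf_mem C hC.nonempty))))
  refine Set.Countable.mono cover ?_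
  exact ((countable_Iio m₀).union (hcnt.biUnion fun γ _ => countable_Iio _))

/-- KEY: any non-countable set whose `next` function is dominated meets every
non-countable block union in a non-countable set -/
lemma blockmeet {C : Set W} (hC : IsClubW C) {g : W → W}
    (hCg : ∀ γ ∈ C, ∀ β, β < γ → g β < γ) {b : Set W} (hbu : BlockUnion C b)
    (hb : ¬ b.Countable) {d : Set W} (hd : ¬ d.Countable)
    (hS : {α | ¬ nextIn d α ≤ g α}.Countable) : ¬ (d ∩ b).Countable := by
  intro hcnt
  set βS := cUB {α | ¬ nextIn d α ≤ g α} with hβS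
  set K := {γ | γ ∈ C ∧ γ ∈ b} ∩ Set.Ioi βS with hK
  have hKnc : ¬ K.Countable := by
    intro hKc
    apply blockUnion_clubpts hC hbu hb
    have : {γ | γ ∈ C ∧ γ ∈ b} ⊆ K ∪ Set.Iic βS := by
      intro γ hγ
      by_cases h : βS < γ
      · exact Or.inl ⟨hγ, h⟩
      · exact Or.inr (not_lt.1 h)
    exact (hKc.union (countable_Iic βS)).mono this
  apply hKnc
  have hmaps : ∀ γ ∈ K, nextIn d γ ∈ d ∩ b := by
    rintro γ ⟨⟨hγC, hγb⟩, hγβS⟩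
    obtain ⟨hmem, hgt⟩ := nextIn_mem hd γ
    refine ⟨hmem, ?_⟩
    have hdom : nextIn d γ ≤ g γ := by
      by_contra hcon
      exact absurd hγβS (not_lt.2 (le_of_lt (lt_cUB hS hcon)))
    have hglt : g γ < nextC C hC γ :=
      hCg _ (nextC_mem C hC γ).1 γ (nextC_mem C hC γ).2
    have hsb : SameBlock C γ (nextIn d γ) :=
      sameBlock_within C hC hγC (le_of_lt hgt) (lt_of_le_of_lt hdom hglt)
    exact (hbu γ (nextIn d γ) hsb).1 hγb
  have hinj : Set.InjOn (nextIn d) K := by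
    have hmono : ∀ γ ∈ K, ∀ γ' ∈ K, γ < γ' → nextIn d γ < nextIn d γ' := by
      rintro γ ⟨⟨hγC, hγb⟩, hγβS⟩ γ' ⟨⟨hγ'C, _⟩, _⟩ hlt
      have h1 : nextIn d γ < nextC C hC γ := by
        have hdom : nextIn d γ ≤ g γ := by
          by_contra hcon
          exact absurd hγβS (not_lt.2 (le_of_lt (lt_cUB hS hcon)))
        exact lt_of_le_of_lt hdom (hCg _ (nextC_mem C hC γ).1 γ (nextC_mem C hC γ).2)
      have h2 : nextC C hC γ ≤ γ' := nextC_min C hC hγ'C hlt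
      exact lt_of_lt_of_le (lt_of_lt_of_le h1 h2) (le_of_lt (nextIn_mem hd γ').2)
    intro γ hγ γ' hγ' heq
    rcases lt_trichotomy γ γ' with h | h | h
    · exact absurd heq (ne_of_lt (hmono γ hγ γ' hγ' h))
    · exact h
    · exact absurd heq.symm (ne_of_lt (hmono γ' hγ' γ hγ h))
  exact Set.countable_of_injective_of_countable_image hinj
    (hcnt.mono (Set.image_subset_iff.2 hmaps))
/-! ### facts about bW, and clubs of closure points -/

lemma bddBelow_cards (s : Set Cardinal) : BddBelow s := ⟨0, fun c _ => (zero_le : 0 ≤ c)⟩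

lemma bW_le_of_unbounded (F : Set (W → W)) (hF : ∀ g, ∃ f ∈ F, ¬ EvDom f g) : bW ≤ #F :=
  csInf_le (bddBelow_cards _) ⟨F, hF, rfl⟩

lemma aleph0_lt_bW : ℵ₀ < bW := by
  have hne : {c | ∃ F : Set (W → W), (∀ g, ∃ f ∈ F, ¬ EvDom f g) ∧ #F = c}.Nonempty := by
    refine ⟨#(Set.univ : Set (W → W)), Set.univ, fun g => ?_, rfl⟩
    refine ⟨fun α => (exists_gt (g α)).choose, Set.mem_univ _, ?_⟩
    intro hdom
    apply not_countable_univW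
    refine hdom.mono ?_
    intro α _
    exact not_le.2 (exists_gt (g α)).choose_spec
  have hmem := csInf_mem hne
  obtain ⟨F, hunb, hcard⟩ := hmem
  rw [lt_iff_not_ge]
  intro hle
  have hcnt : F.Countable := by
    rw [← Set.countable_coe_iff, ← Cardinal.mk_le_aleph0_iff, hcard]
    exact hle
  obtain ⟨f, hf, hnd⟩ := hunb (fun α => cUB ((fun f : W → W => f α) '' F))
  apply hnd
  have : {α | ¬ f α ≤ (fun α => cUB ((fun f : W → W => f α) '' F)) α} = ∅ := by
    apply Set.eq_empty_iff_forall_notMem.2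
    intro α hα
    exact hα (le_of_lt (lt_cUB (hcnt.image _) (Set.mem_image_of_mem _ hf)))
  rw [EvDom, this]
  exact Set.countable_empty

/-- closure points of a function -/
def closurePts (k : W → W) : Set W := {γ | ∀ β, β < γ → k β < γ}

lemma isClub_closurePts (k : W → W) : IsClubW (closurePts k) := by
  constructor
  · -- unbounded
    intro α
    have hseq : ∀ x : W, ∃ y : W, x < y ∧ ∀ β ≤ x, k β < y := by
      intro x
      set s := k '' Set.Iic x ∪ {x} with hs
      have hsc : s.Countable := ((countable_Iic x).image k).union (Set.countable_singleton x)
      refine ⟨cUB s, lt_cUB hsc (Or.inr rfl), fun β hβ => ?_⟩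
      exact lt_cUB hsc (Or.inl ⟨β, hβ, rfl⟩)
    choose nxt hnxt1 hnxt2 using hseq
    set a : ℕ → W := fun n => Nat.rec α (fun _ x => nxt x) n with ha
    have ha0 : a 0 = α := rfl
    have hstep : ∀ n, a (n + 1) = nxt (a n) := fun n => rfl
    have hcnt : (Set.range a).Countable := Set.countable_range a
    set m := lUB (Set.range a) hcnt with hm
    refine ⟨m, ?_, ?_⟩
    · -- m ∈ closurePts k
      intro β hβ
      obtain ⟨x, ⟨n, rfl⟩, hx⟩ := lUB_least hcnt hβ
      have h1 : k β < a (n + 1) := by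
        rw [hstep]
        exact hnxt2 (a n) β hx
      exact lt_trans h1 (lt_lUB hcnt ⟨n + 1, rfl⟩)
    · -- α < m
      exact lt_lUB hcnt ⟨0, rfl⟩
  · -- closed
    intro α hne hlub
    intro β hβ
    have : ¬ (∀ x ∈ closurePts k ∩ Set.Iio α, x ≤ β) := by
      intro hub
      exact absurd (hlub.2 hub) (not_le.2 hβ)
    push_neg at this
    obtain ⟨γ, ⟨hγcp, hγα⟩, hβγ⟩ := this
    exact lt_trans (hγcp β hβγ) hγα

lemma isClub_inter_Ioi {C₀ : Set W} (hC₀ : IsClubW C₀) (δ : W) :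
    IsClubW (C₀ ∩ Set.Ioi δ) := by
  constructor
  · intro α
    obtain ⟨β, hβ, hαβ⟩ := hC₀.1 (max α δ)
    exact ⟨β, ⟨hβ, lt_of_le_of_lt (le_max_right _ _) hαβ⟩,
      lt_of_le_of_lt (le_max_left α δ) hαβ⟩
  · intro α hne hlub
    obtain ⟨x, ⟨hxC, hxδ⟩, hxα⟩ := hne
    constructor
    · apply hC₀.2 α ⟨x, hxC, hxα⟩
      constructor
      · intro y hy
        exact le_of_lt hy.2
      · intro z hz
        apply hlub.2
        intro y ⟨⟨hyC, hyδ⟩, hyα⟩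
        exact hz ⟨hyC, hyα⟩
    · exact lt_trans (Set.mem_Ioi.1 hxδ) (Set.mem_Iio.1 hxα)
/-! ### the critical pairs and the function h -/

def PairP (E : Set (Set W)) (p q : W) : Prop :=
  ∃ a ∈ E, ∃ u w : Set W, u ⊆ w ∧ w.Finite ∧ InGen (E \ {a}) w ∧ ¬ InGen (E \ {a}) u ∧
    InGen (E \ {a}) (sd a u) ∧ p ∈ u ∧ q ∈ w \ u ∧
    ∀ s : Set W, InGen (E \ {a}) s → (p ∈ s ↔ q ∈ s)

def Qset (E : Set (Set W)) (p : W) : Set W := {q | PairP E p q ∨ PairP E q p}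

/-- extract the common data of a critical pair, symmetrically in p -/
lemma pair_data {E : Set (Set W)} {p q : W} (h : q ∈ Qset E p) :
    ∃ a ∈ E, ∃ w : Set W, w.Finite ∧ InGen (E \ {a}) w ∧ p ∈ w ∧
      ∀ s : Set W, InGen (E \ {a}) s → (p ∈ s ↔ q ∈ s) := by
  rcases h with h | h
  · obtain ⟨a, ha, u, w, huw, hwf, hw, _, _, hp, hq, hiff⟩ := h
    exact ⟨a, ha, w, hwf, hw, huw hp, hiff⟩
  · obtain ⟨a, ha, u, w, huw, hwf, hw, _, _, hq, hp, hiff⟩ := h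
    exact ⟨a, ha, w, hwf, hw, hp.1, fun s hs => (hiff s hs).symm⟩

open Classical in
lemma countable_Qset (E : Set (Set W)) (p : W) : (Qset E p).Countable := by
  by_cases hne : (Qset E p).Nonempty
  swap
  · rw [Set.not_nonempty_iff_eq_empty.1 hne]
    exact Set.countable_empty
  obtain ⟨q₀, hq₀⟩ := hne
  obtain ⟨a₀, ha₀, w₀, hw₀f, hw₀, hpw₀, _⟩ := pair_data hq₀
  obtain ⟨G₀, hG₀sub, hG₀f, hG₀gen⟩ := hw₀.exists_finite_support
  set Wa : Set W → Set W := fun a =>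
    if h : ∃ w' : Set W, InGen (E \ {a}) w' ∧ p ∈ w' ∧ w'.Finite then h.choose else ∅
    with hWa
  have hcover : Qset E p ⊆ w₀ ∪ ⋃ a ∈ G₀, Wa a := by
    intro q hq
    obtain ⟨a, _, w, hwf, hw, hpw, hiff⟩ := pair_data hq
    by_cases haG : a ∈ G₀
    · right
      have hex : ∃ w' : Set W, InGen (E \ {a}) w' ∧ p ∈ w' ∧ w'.Finite := ⟨w, hw, hpw, hwf⟩
      have hsp := hex.choose_spec
      refine Set.mem_biUnion haG ?_
      show q ∈ Wa a
      rw [hWa]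
      simp only [dif_pos hex]
      exact (hiff _ hsp.1).1 hsp.2.1
    · left
      have hsub : G₀ ⊆ E \ {a} := by
        intro x hx
        exact ⟨(hG₀sub hx).1, fun hxa => haG (hxa ▸ hx)⟩
      exact (hiff w₀ (hG₀gen.mono hsub)).1 hpw₀
  refine Set.Countable.mono hcover ?_
  refine (hw₀f.countable).union ((hG₀f.countable).biUnion ?_)
  intro a _
  rw [hWa]
  by_cases hex : ∃ w' : Set W, InGen (E \ {a}) w' ∧ p ∈ w' ∧ w'.Finite
  · simp only [dif_pos hex]
    exact hex.choose_spec.2.2.countable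
  · simp only [dif_neg hex]
    exact Set.countable_empty

def Tset (E : Set (Set W)) (α : W) : Set W := ⋃ p ∈ Set.Iic α, Qset E p

lemma countable_Tset (E : Set (Set W)) (α : W) : (Tset E α).Countable :=
  (countable_Iic α).biUnion fun p _ => countable_Qset E p

noncomputable def hfun (E : Set (Set W)) : W → W := fun α => cUB (Tset E α)

lemma lt_hfun {E : Set (Set W)} {α q : W} (h : q ∈ Tset E α) : q < hfun E α :=
  lt_cUB (countable_Tset E α) h

lemma mem_Tset {E : Set (Set W)} {m M α : W} (h1 : m ≤ α) (h2 : M ∈ Qset E m) :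
    M ∈ Tset E α :=
  Set.mem_biUnion h1 h2
/-! ### the main construction: an unbounded family from a maximal irredundant set -/

noncomputable def Fam (E : Set (Set W)) : Set (W → W) :=
  (fun d : Set W => nextIn d) '' {d : Set W | InGen E d ∧ ¬ d.Countable ∧ ¬ dᶜ.Countable}
    ∪ {hfun E}

theorem Fam_unbounded (Bs : Set (Set W)) (hsub : IsSubalg Bs) (hdich : Dichot Bs)
    (hbl : ∀ C : Set W, IsClubW C → ∃ b ∈ Bs, Blockish C b)
    (E : Set (Set W)) (hE : MaxIrredIn Bs E) :
    ∀ g : W → W, ∃ f ∈ Fam E, ¬ EvDom f g := by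
  intro g
  by_contra hcon
  push_neg at hcon
  have hdomh : EvDom (hfun E) g := hcon _ ((Set.mem_union _ _ _).2 (Or.inr rfl))
  have hdomd : ∀ d : Set W, InGen E d → ¬ d.Countable → ¬ dᶜ.Countable →
      {α | ¬ nextIn d α ≤ g α}.Countable := by
    intro d h1 h2 h3
    exact hcon _ ((Set.mem_union _ _ _).2 (Or.inl ⟨d, ⟨h1, h2, h3⟩, rfl⟩))
  set k : W → W := fun β => max (g β) (hfun E β) with hk
  have hC₀ : IsClubW (closurePts k) := isClub_closurePts k
  have hC₀g : ∀ γ ∈ closurePts k, ∀ β, β < γ → g β < γ := fun γ hγ β hβ =>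
    lt_of_le_of_lt (le_max_left _ _) (hγ β hβ)
  have hC₀h : ∀ γ ∈ closurePts k, ∀ β, β < γ → hfun E β < γ := fun γ hγ β hβ =>
    lt_of_le_of_lt (le_max_right _ _) (hγ β hβ)
  set δ₁ := cUB {α | ¬ hfun E α ≤ g α} with hδ₁
  obtain ⟨δ, hδC₀, hδ₁δ⟩ := hC₀.1 δ₁
  set C := closurePts k ∩ Set.Ioi δ with hCdef
  have hC : IsClubW C := isClub_inter_Ioi hC₀ δ
  have hCg : ∀ γ ∈ C, ∀ β, β < γ → g β < γ := fun γ hγ => hC₀g γ hγ.1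
  obtain ⟨b, hbBs, hbu, hbnc, hbcnc⟩ := hbl C hC
  have bmeet : ∀ d : Set W, InGen E d → ¬ d.Countable → ¬ dᶜ.Countable →
      ¬ (d ∩ b).Countable ∧ ¬ (d ∩ bᶜ).Countable := by
    intro d h1 h2 h3
    exact ⟨blockmeet hC hCg hbu hbnc h2 (hdomd d h1 h2 h3),
      blockmeet hC hCg (blockUnion_compl hbu) hbcnc h2 (hdomd d h1 h2 h3)⟩
  have hbD : ¬ InGen E b := by
    intro h
    apply (bmeet b h hbnc hbcnc).2
    rw [Set.inter_compl_self]
    exact Set.countable_empty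
  have hbE : b ∉ E := fun h => hbD (InGen.base h)
  have hni := hE.2.2 b hbBs hbE
  unfold Irred at hni
  push_neg at hni
  obtain ⟨a, hamem, hagen⟩ := hni
  rcases Set.mem_insert_iff.1 hamem with rfl | haE
  · -- the inserted element itself became redundant: impossible since b ∉ ⟨E⟩
    apply hbD
    refine hagen.mono ?_
    intro x hx
    rcases Set.mem_insert_iff.1 hx.1 with rfl | h
    · exact absurd rfl hx.2
    · exact h
  · have hab : a ≠ b := fun h => hbE (h ▸ haE)
    have hset : (insert b E) \ {a} = insert b (E \ {a}) := by
      ext x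
      simp only [Set.mem_diff, Set.mem_insert_iff, Set.mem_singleton_iff]
      constructor
      · rintro ⟨(rfl | hx), hxa⟩
        · exact Or.inl rfl
        · exact Or.inr ⟨hx, hxa⟩
      · rintro (rfl | ⟨hx, hxa⟩)
        · exact ⟨Or.inl rfl, fun h => hab h.symm⟩
        · exact ⟨Or.inr hx, hxa⟩
    rw [hset] at hagen
    obtain ⟨u, v, hu, hv, hrepr⟩ := hagen.normal_form
    set s1 := sd a v with hs1def
    set s2 := sd a u with hs2def
    have hmemrepr : ∀ x : W, x ∈ a ↔ (x ∈ u ∧ x ∈ b) ∨ (x ∈ v ∧ x ∉ b) := by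
      intro x
      rw [hrepr]
      simp [Set.mem_union, Set.mem_diff, Set.mem_inter_iff]
    have hs1b : s1 ⊆ b := by
      intro x hx
      rcases (Set.mem_union _ _ _).1 hx with ⟨hxa, hxv⟩ | ⟨hxv, hxa⟩
      · by_contra hxb
        rcases (hmemrepr x).1 hxa with ⟨_, h⟩ | ⟨h, _⟩
        · exact hxb h
        · exact hxv h
      · by_contra hxb
        exact hxa ((hmemrepr x).2 (Or.inr ⟨hxv, hxb⟩))
    have hs2bc : s2 ⊆ bᶜ := by
      intro x hx
      rcases (Set.mem_union _ _ _).1 hx with ⟨hxa, hxu⟩ | ⟨hxu, hxa⟩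
      · intro hxb
        rcases (hmemrepr x).1 hxa with ⟨h, _⟩ | ⟨_, h⟩
        · exact hxu h
        · exact h hxb
      · intro hxb
        exact hxa ((hmemrepr x).2 (Or.inl ⟨hxu, hxb⟩))
    have huE : InGen E u := hu.mono Set.diff_subset
    have hvE : InGen E v := hv.mono Set.diff_subset
    have haD : InGen E a := InGen.base haE
    have hs1D : InGen E s1 := haD.sd' hvE
    have hs2D : InGen E s2 := haD.sd' huE
    have finite_of : ∀ s : Set W, InGen E s → s ⊆ b ∨ s ⊆ bᶜ → s.Finite := by
      intro s hsD hside
      have hsBs : s ∈ Bs := hsD.mem_subalg hsub hE.1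
      by_cases hcnt : s.Countable
      · exact Set.not_infinite.1 (fun hinf => hdich s hsBs ⟨hcnt, hinf⟩)
      · exfalso
        rcases hside with hsb | hsbc
        · have hscnc : ¬ sᶜ.Countable :=
            not_countable_mono (Set.compl_subset_compl.2 hsb) hbcnc
          apply (bmeet s hsD hcnt hscnc).2
          have : s ∩ bᶜ = ∅ := by
            apply Set.eq_empty_iff_forall_notMem.2
            intro x hx
            exact hx.2 (hsb hx.1)
          rw [this]
          exact Set.countable_empty
        · have hscnc : ¬ sᶜ.Countable :=
            not_countable_mono (Set.subset_compl_comm.1 hsbc) hbnc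
          apply (bmeet s hsD hcnt hscnc).1
          have : s ∩ b = ∅ := by
            apply Set.eq_empty_iff_forall_notMem.2
            intro x hx
            exact (hsbc hx.1) hx.2
          rw [this]
          exact Set.countable_empty
    have hs1f : s1.Finite := finite_of s1 hs1D (Or.inl hs1b)
    have hs2f : s2.Finite := finite_of s2 hs2D (Or.inr hs2bc)
    have hIrr := hE.2.1
    have hs1ne : s1 ≠ ∅ := by
      intro h
      exact hIrr a haE ((sd_empty_iff.1 h).symm ▸ hv)
    have hs1nDa : ¬ InGen (E \ {a}) s1 := by
      intro h
      apply hIrr a haE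
      have heq : sd v s1 = a := by
        rw [hs1def, sd_comm a v, sd_sd_cancel]
      exact heq ▸ (hv.sd' h)
    set w := s1 ∪ s2 with hwdef
    have hweq : w = sd u v := by
      ext x
      by_cases hxb : x ∈ b
      · have hxa : x ∈ a ↔ x ∈ u := by
          rw [hmemrepr x]
          constructor
          · rintro (⟨h, _⟩ | ⟨_, hnb⟩)
            · exact h
            · exact absurd hxb hnb
          · intro h
            exact Or.inl ⟨h, hxb⟩
        have hxs2 : ¬ (x ∈ a ↔ ¬ x ∈ u) := by
          intro h
          exact hs2bc (mem_sd_iff.2 h) hxb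
        simp only [hwdef, Set.mem_union, hs1def, hs2def, mem_sd_iff]
        constructor
        · rintro (h | h)
          · exact hxa.symm.trans h
          · exact absurd h hxs2
        · intro h
          exact Or.inl (hxa.trans h)
      · have hxa : x ∈ a ↔ x ∈ v := by
          rw [hmemrepr x]
          constructor
          · rintro (⟨_, hb⟩ | ⟨h, _⟩)
            · exact absurd hb hxb
            · exact h
          · intro h
            exact Or.inr ⟨h, hxb⟩
        have hxs1 : ¬ (x ∈ a ↔ ¬ x ∈ v) := by
          intro h
          exact hxb (hs1b (mem_sd_iff.2 h))
        simp only [hwdef, Set.mem_union, hs1def, hs2def, mem_sd_iff]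
        constructor
        · rintro (h | h)
          · exact absurd h hxs1
          · exact (iff_not_comm.1 h).trans (not_congr hxa)
        · intro h
          exact Or.inr (hxa.trans (iff_not_comm.1 h))
    have hwDa : InGen (E \ {a}) w := by
      rw [hweq]
      exact hu.sd' hv
    have hwf : w.Finite := hs1f.union hs2f
    obtain ⟨p, q, hp, hq, hiff⟩ :=
      cross_pair (Da := {x : Set W | InGen (E \ {a}) x}) InGen.empty
        (fun s hs t ht => InGen.union hs ht) (fun s hs t ht => InGen.inter hs ht)
        (fun s hs t ht => InGen.sdiff' hs ht) hwDa hwf Set.subset_union_left hs1nDa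
    have hqs2 : q ∈ s2 := by
      rcases (Set.mem_union _ _ _).1 hq.1 with h | h
      · exact absurd h hq.2
      · exact h
    have hpb : p ∈ b := hs1b hp
    have hqb : q ∉ b := hs2bc hqs2
    have hPair : PairP E p q := by
      refine ⟨a, haE, s1, w, Set.subset_union_left, hwf, hwDa, hs1nDa, ?_, hp, hq, hiff⟩
      have : sd a s1 = v := by rw [hs1def, sd_sd_cancel]
      rw [this]
      exact hv
    have hpq_blocks : ¬ SameBlock C p q := fun hsb => hqb ((hbu p q hsb).1 hpb)
    unfold SameBlock at hpq_blocks
    push_neg at hpq_blocks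
    obtain ⟨γ, hγC, hγiff⟩ := hpq_blocks
    have hγC₀ : γ ∈ closurePts k := hγC.1
    have hδγ : δ < γ := hγC.2
    -- orient the pair
    have hkey : ∃ m M : W, m < γ ∧ γ ≤ M ∧ M ∈ Qset E m := by
      rcases hγiff with ⟨h1, h2⟩ | ⟨h1, h2⟩
      · exact ⟨q, p, h2, h1, Or.inr hPair⟩
      · exact ⟨p, q, h1, h2, Or.inl hPair⟩
    obtain ⟨m, M, hmγ, hγM, hQ⟩ := hkey
    by_cases hmδ : m ≤ δ
    · have hM1 : M < hfun E δ := lt_hfun (mem_Tset hmδ hQ)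
      have hM2 : hfun E δ < γ := hC₀h γ hγC₀ δ hδγ
      exact absurd hγM (not_le.2 (lt_trans hM1 hM2))
    · have hδm : δ < m := not_le.1 hmδ
      have hmS : hfun E m ≤ g m := by
        by_contra hcon2
        have h1 : m < δ₁ := lt_cUB hdomh hcon2
        exact absurd (lt_trans (lt_trans h1 hδ₁δ) hδm) (lt_irrefl m)
      have hgm : g m < γ := hC₀g γ hγC₀ m hmγ
      have hMT : M < hfun E m := lt_hfun (mem_Tset (le_refl m) hQ)
      exact absurd hγM (not_le.2 (lt_trans (lt_of_lt_of_le hMT hmS) hgm))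
/-! ### final assembly -/

lemma bW_le_mkE (Bs : Set (Set W)) (hsub : IsSubalg Bs) (hdich : Dichot Bs)
    (hbl : ∀ C : Set W, IsClubW C → ∃ b ∈ Bs, Blockish C b)
    (E : Set (Set W)) (hE : MaxIrredIn Bs E) : bW ≤ #E := by
  have h1 : bW ≤ #(Fam E) :=
    bW_le_of_unbounded _ (Fam_unbounded Bs hsub hdich hbl E hE)
  have h2 : #(Fam E) ≤ max ℵ₀ #E := by
    refine le_trans (Cardinal.mk_union_le _ _) ?_
    have ha : #((fun d : Set W => nextIn d) ''
        {d : Set W | InGen E d ∧ ¬ d.Countable ∧ ¬ dᶜ.Countable}) ≤ max ℵ₀ #E := by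
      refine le_trans Cardinal.mk_image_le ?_
      refine le_trans (Cardinal.mk_le_mk_of_subset ?_) (mk_InGen_le E)
      intro d hd
      exact hd.1
    have hb : #({hfun E} : Set (W → W)) ≤ max ℵ₀ #E := by
      rw [Cardinal.mk_singleton]
      exact le_trans Cardinal.one_le_aleph0 (le_max_left _ _)
    calc #((fun d : Set W => nextIn d) ''
          {d : Set W | InGen E d ∧ ¬ d.Countable ∧ ¬ dᶜ.Countable})
          + #({hfun E} : Set (W → W)) ≤ max ℵ₀ #E + max ℵ₀ #E := add_le_add ha hb
      _ = max ℵ₀ #E := Cardinal.add_eq_self (le_max_left _ _)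
  rcases le_total #E ℵ₀ with h | h
  · exfalso
    rw [max_eq_left h] at h2
    exact absurd (le_trans h1 h2) (not_le.2 aleph0_lt_bW)
  · rw [max_eq_right h] at h2
    exact le_trans h1 h2

lemma chain_finite_subset {c : Set (Set (Set W))} (hchain : IsChain (· ⊆ ·) c)
    {G : Set (Set W)} (hG : G.Finite) :
    G ⊆ ⋃₀ c → c.Nonempty → ∃ t ∈ c, G ⊆ t := by
  refine Set.Finite.induction_on
    (motive := fun G _ => G ⊆ ⋃₀ c → c.Nonempty → ∃ t ∈ c, G ⊆ t) _ hG ?_ ?_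
  · intro _ hne
    obtain ⟨t, ht⟩ := hne
    exact ⟨t, ht, Set.empty_subset t⟩
  · rintro x G' hx hG' ih hsub hne
    obtain ⟨t, htc, hGt⟩ := ih (le_trans (Set.subset_insert x G') hsub) hne
    obtain ⟨s, hsc, hxs⟩ := hsub (Set.mem_insert x G')
    rcases eq_or_ne t s with rfl | hts
    · exact ⟨t, htc, Set.insert_subset hxs hGt⟩
    · rcases hchain.total htc hsc with h | h
      · exact ⟨s, hsc, Set.insert_subset hxs (le_trans hGt h)⟩
      · exact ⟨t, htc, Set.insert_subset (h hxs) hGt⟩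

lemma exists_maxIrredIn (Bs : Set (Set W)) : ∃ E, MaxIrredIn Bs E := by
  have hzorn : ∀ c ⊆ {E : Set (Set W) | E ⊆ Bs ∧ Irred E}, IsChain (· ⊆ ·) c →
      ∃ ub ∈ {E : Set (Set W) | E ⊆ Bs ∧ Irred E}, ∀ s ∈ c, s ⊆ ub := by
    intro c hcS hchain
    refine ⟨⋃₀ c, ⟨?_, ?_⟩, fun s hs => Set.subset_sUnion_of_mem hs⟩
    · exact Set.sUnion_subset fun s hs => (hcS hs).1
    · intro a ha hInGen
      obtain ⟨t₀, ht₀c, hat₀⟩ := ha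
      obtain ⟨G, hGsub, hGfin, hGgen⟩ := hInGen.exists_finite_support
      obtain ⟨t, htc, hGt⟩ := chain_finite_subset hchain (hGfin.insert a)
        (Set.insert_subset (Set.mem_sUnion.2 ⟨t₀, ht₀c, hat₀⟩)
          (le_trans hGsub Set.diff_subset)) ⟨t₀, ht₀c⟩
      apply (hcS htc).2 a (hGt (Set.mem_insert a G))
      refine hGgen.mono ?_
      intro x hxG
      exact ⟨hGt (Set.mem_insert_of_mem a hxG), (hGsub hxG).2⟩
  obtain ⟨M, hM⟩ := zorn_subset {E : Set (Set W) | E ⊆ Bs ∧ Irred E} hzorn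
  refine ⟨M, hM.1.1, hM.1.2, ?_⟩
  intro b hbBs hbM hIrr
  have hmem : insert b M ∈ {E : Set (Set W) | E ⊆ Bs ∧ Irred E} :=
    ⟨Set.insert_subset hbBs hM.1.1, hIrr⟩
  have := hM.2 hmem (Set.subset_insert b M)
  exact hbM (this (Set.mem_insert b M))

theorem irrMM_ge_bW_of_blockish' (Bs : Set (Set W)) (hsub : IsSubalg Bs)
    (hdich : Dichot Bs)
    (hbl : ∀ C : Set W, IsClubW C → ∃ b ∈ Bs, Blockish C b) :
    bW ≤ irrMMIn Bs := by
  have hne : {c | ∃ E, MaxIrredIn Bs E ∧ #E = c}.Nonempty := by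
    obtain ⟨E, hE⟩ := exists_maxIrredIn Bs
    exact ⟨#E, E, hE, rfl⟩
  refine le_csInf hne ?_
  rintro c ⟨E, hE, rfl⟩
  exact bW_le_mkE Bs hsub hdich hbl E hE
theorem irrMM_ge_bW_of_blockish (Bs : Set (Set W)) (hsub : IsSubalg Bs)
    (hA : finCofin ⊂ Bs) (hproper : Bs ⊂ Set.univ) (hdich : Dichot Bs)
    (hbl : ∀ C : Set W, IsClubW C → ∃ b ∈ Bs, Blockish C b) :
    bW ≤ irrMMIn Bs :=
  irrMM_ge_bW_of_blockish' Bs hsub hdich hbl
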